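/- Let f be a triangular face of a plane graph with incident vertex degrees d₀ ≤ d₁ ≤ d₂, all in {3,…,8}, satisfying: d₀ ≥ 3; if d₀ = 3 then d₁ ≥ 7; if d₀ = 4 then d₁ ≥ 6, and if moreover d₁ = 6 then d₂ ≥ 7; if d₀ = d₁ = 5 then d₂ ≥ 7. Define the charge sent to f by an incident vertex of degree d as: for d ≥ 7: 3/2 if f is a (3,≥7,≥7)- or (4,6,≥7)-triangle, 7/5 if (5,5,≥7), 5/4 if (4,≥7,≥7), 6/5 if (5,6,8), 11/10 if (5,6,7) or (5,≥7,≥7), 1 if all three degrees are ≥ 6; for d = 6: 11/10 if f is (5,6,6) or (5,6,7), else 1; for d = 5: 4/5; for d = 4: 1/2. Then the total charge received by f is at least 3. -/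
import Mathlib


/-- The charge sent to a triangle with (sorted) incident degrees `(d0, d1, d2)`
by an incident vertex of degree `d`, following rules R1–R4. -/
def triangleSend (d0 d1 d2 d : ℕ) : ℚ :=
  if 7 ≤ d then
    if (d0 = 3 ∧ 7 ≤ d1) ∨ (d0 = 4 ∧ d1 = 6 ∧ 7 ≤ d2) then 3 / 2
    else if d0 = 5 ∧ d1 = 5 then 7 / 5
    else if d0 = 4 ∧ 7 ≤ d1 then 5 / 4
    else if d0 = 5 ∧ d1 = 6 ∧ d2 = 8 then 6 / 5
    else if (d0 = 5 ∧ d1 = 6 ∧ d2 = 7) ∨ (d0 = 5 ∧ 7 ≤ d1) then 11 / 10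
    else if 6 ≤ d0 then 1
    else 0
  else if d = 6 then
    if d0 = 5 ∧ d1 = 6 ∧ (d2 = 6 ∨ d2 = 7) then 11 / 10 else 1
  else if d = 5 then 4 / 5
  else if d = 4 then 1 / 2
  else 0

/-- For every admissible degree triple `d₀ ≤ d₁ ≤ d₂` of a
triangular face (degrees in `{3,…,8}`, with the constraints coming from the
reducibility of configurations A1, B1 and B2), the total charge received by the
triangle is at least 3. -/
theorem triangle_receives_three (d0 d1 d2 : ℕ)
    (h01 : d0 ≤ d1) (h12 : d1 ≤ d2) (hlo : 3 ≤ d0) (hhi : d2 ≤ 8)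
    (hA : d0 = 3 → 7 ≤ d1)
    (hB : d0 = 4 → 6 ≤ d1)
    (hC : d0 = 4 → d1 = 6 → 7 ≤ d2)
    (hD : d0 = 5 → d1 = 5 → 7 ≤ d2) :
    3 ≤ triangleSend d0 d1 d2 d0 + triangleSend d0 d1 d2 d1 + triangleSend d0 d1 d2 d2 := by
  have h02 : d0 ≤ 8 := (h01.trans h12).trans hhi
  have h1 : d1 ≤ 8 := h12.trans hhi
  have hlo1 : 3 ≤ d1 := hlo.trans h01
  have hlo2 : 3 ≤ d2 := hlo1.trans h12
  interval_cases d0 <;> interval_cases d1 <;> interval_cases d2 <;>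
    simp_all [triangleSend] <;> norm_num
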